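/- Let X be a finite-dimensional normed space of dimension ≥ 2 and C ⊆ X a convex body with no asymptotic directions. If {B_n} is a decreasing sequence of convex bodies contained in C with ⋂_n B_n = ∅, then ⋂_n e(B_n) = ∅. -/

import Mathlib

/-- `K(y,B)`: the intersection of all closed half-spaces `[g ≤ g y]` over norm-one
functionals `g` supporting `B` at `y`. -/
def Kset {X : Type*} [NormedAddCommGroup X] [NormedSpace ℝ X]
    (B : Set X) (y : X) : Set X :=
  ⋂ g ∈ {g : X →L[ℝ] ℝ | ‖g‖ = 1 ∧ ∀ z ∈ B, g z ≤ g y}, {z : X | g z ≤ g y}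

/-- The relative boundary of `B` in the subspace topology of `C`. -/
def relBdry {X : Type*} [NormedAddCommGroup X] [NormedSpace ℝ X]
    (C B : Set X) : Set X :=
  (C ∩ closure B) ∩ closure (C \ B)

/-- The relative interior of `B` in the subspace topology of `C`. -/
def relInt {X : Type*} [NormedAddCommGroup X] [NormedSpace ℝ X]
    (C B : Set X) : Set X :=
  C \ closure (C \ B)

/-- The extension `e(B)` of a convex body `B ⊆ C`. -/
def eExt {X : Type*} [NormedAddCommGroup X] [NormedSpace ℝ X]
    (C B : Set X) : Set X :=
  ⋂ y ∈ relBdry C B, Kset B y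

/-- `v` is an asymptotic direction of the closed convex set `C`. -/
def IsAsymptoticDir {X : Type*} [NormedAddCommGroup X] [NormedSpace ℝ X]
    (C : Set X) (v : X) : Prop :=
  v ≠ 0 ∧ ∃ x₀ : X,
    (∀ t : ℝ, 0 ≤ t → x₀ + t • v ∉ interior C) ∧
    Filter.Tendsto (fun t : ℝ => Metric.infDist (x₀ + t • v) C) Filter.atTop (nhds 0)


open Filter Metric Set

set_option maxHeartbeats 1000000 in
/-- Key single-body lemma. -/
lemma exit_ray {X : Type*} [NormedAddCommGroup X] [NormedSpace ℝ X]
    {C B : Set X} (hconv : Convex ℝ C)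
    (hBcl : IsClosed B) (hBconv : Convex ℝ B) (hBC : B ⊆ C)
    {b x : X} (hb : b ∈ interior B)
    (hx : x ∈ (⋂ y ∈ relBdry C B, Kset B y)) (hxB : x ∉ B) :
    ∃ y ∈ B, ∀ s : ℝ, 0 < s → s ≤ 1 → y + s • (x - y) ∉ C := by
  classical
  set φ : ℝ → X := fun l => b + l • (x - b) with hφ
  have hφc : Continuous φ := by continuity
  set S : Set ℝ := {l : ℝ | l ∈ Icc (0:ℝ) 1 ∧ φ l ∈ B} with hS
  have hScl : IsClosed S := (isClosed_Icc.preimage continuous_id).inter (hBcl.preimage hφc)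
  have hS0 : (0:ℝ) ∈ S := by
    refine ⟨⟨le_rfl, zero_le_one⟩, ?_⟩
    simp only [hφ, zero_smul, add_zero]
    exact interior_subset hb
  have hScomp : IsCompact S := (isCompact_Icc (a := (0:ℝ)) (b := 1)).of_isClosed_subset hScl
    (fun l hl => hl.1)
  set l₀ : ℝ := sSup S with hl₀
  have hl₀S : l₀ ∈ S := hScomp.sSup_mem ⟨0, hS0⟩
  set y : X := φ l₀ with hy
  have hyB : y ∈ B := hl₀S.2
  have hl₀0 : 0 ≤ l₀ := hl₀S.1.1
  have hl₀1 : l₀ ≤ 1 := hl₀S.1.2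
  have hl₀lt : l₀ < 1 := by
    rcases lt_or_eq_of_le hl₀1 with h | h
    · exact h
    · exfalso; apply hxB; have := hyB; rw [hy, hφ] at this; simp [h] at this; simpa using this
  have hnotin : ∀ l : ℝ, l₀ < l → l ≤ 1 → φ l ∉ B := by
    intro l hl hl1 hmem
    exact absurd (le_csSup hScomp.bddAbove ⟨⟨hl₀0.trans hl.le, hl1⟩, hmem⟩) (not_le.mpr hl)
  have hyint : y ∉ interior B := by
    intro hyi
    have : ∀ᶠ l in nhds l₀, φ l ∈ interior B :=
      hφc.continuousAt.eventually_mem (isOpen_interior.mem_nhds hyi)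
    obtain ⟨ε, hε, hball⟩ := Metric.eventually_nhds_iff.mp this
    set l := min 1 (l₀ + ε / 2) with hl
    have hll : l₀ < l := lt_min hl₀lt (by linarith)
    have hld : dist l l₀ < ε := by
      rw [Real.dist_eq, abs_of_pos (by linarith)]
      have : l ≤ l₀ + ε / 2 := min_le_right _ _
      linarith
    exact hnotin l hll (min_le_left _ _) (interior_subset (hball hld))
  -- y is not in the closure of C \ B
  have hycl : y ∉ closure (C \ B) := by
    intro hyc
    have hyrb : y ∈ relBdry C B := ⟨⟨hBC hyB, subset_closure hyB⟩, hyc⟩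
    have hxK : x ∈ Kset B y := Set.mem_iInter₂.mp hx y hyrb
    obtain ⟨f, hf⟩ := geometric_hahn_banach_open_point hBconv.interior isOpen_interior hyint
    have hfb : f b < f y := hf b hb
    have hfne : f ≠ 0 := by intro h; rw [h] at hfb; simp at hfb
    have hfnorm : (0:ℝ) < ‖f‖ := norm_pos_iff.mpr hfne
    have hfle : ∀ z ∈ B, f z ≤ f y := by
      intro z hz
      have key : ∀ n : ℕ, f ((1/(n+1) : ℝ) • b + (1 - 1/(n+1) : ℝ) • z) < f y := by
        intro n
        have h1 : (0:ℝ) < 1/(n+1) := by positivity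
        have h2 : (0:ℝ) ≤ 1 - 1/(n+1) := by
          have h3 : (1:ℝ) ≤ (n:ℝ) + 1 := by exact_mod_cast Nat.succ_le_succ (Nat.zero_le n)
          have h4 : (1:ℝ)/(n+1) ≤ 1 := by
            rw [div_le_one (by positivity)]; linarith
          linarith
        refine hf _ ?_
        have := hBconv.combo_interior_closure_mem_interior hb (subset_closure hz) h1 h2 (by ring)
        exact this
      have hlim : Filter.Tendsto
          (fun n : ℕ => f ((1/(n+1) : ℝ) • b + (1 - 1/(n+1) : ℝ) • z)) atTop (nhds (f z)) := by
        have h0 : Filter.Tendsto (fun n : ℕ => (1/(n+1) : ℝ)) atTop (nhds 0) :=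
          tendsto_one_div_add_atTop_nhds_zero_nat
        have : Filter.Tendsto (fun n : ℕ => (1/(n+1) : ℝ) • b + (1 - 1/(n+1) : ℝ) • z)
            atTop (nhds ((0:ℝ) • b + (1 - 0 : ℝ) • z)) := by
          exact (h0.smul_const b).add (((tendsto_const_nhds.sub h0).smul_const z))
        simpa [Function.comp_def] using ((f.continuous.tendsto _).comp this)
      exact le_of_tendsto hlim (Filter.Eventually.of_forall fun n => (key n).le)
    set g : X →L[ℝ] ℝ := ‖f‖⁻¹ • f with hg
    have hgnorm : ‖g‖ = 1 := by
      show ‖‖f‖⁻¹ • f‖ = 1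
      rw [norm_smul (α := ℝ) (β := X →L[ℝ] ℝ) ‖f‖⁻¹ f]
      simp [norm_ne_zero_iff.mpr hfne]
    have hgle : ∀ z ∈ B, g z ≤ g y := by
      intro z hz
      show ‖f‖⁻¹ * f z ≤ ‖f‖⁻¹ * f y
      exact mul_le_mul_of_nonneg_left (hfle z hz) (by positivity)
    have hgx : g x ≤ g y := by
      have := Set.mem_iInter₂.mp hxK g ⟨hgnorm, hgle⟩
      exact this
    have hgb : g b < g y := by
      show ‖f‖⁻¹ * f b < ‖f‖⁻¹ * f y
      exact mul_lt_mul_of_pos_left hfb (by positivity)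
    have hl₀pos : 0 < l₀ := by
      rcases lt_or_eq_of_le hl₀0 with h | h
      · exact h
      · exfalso; apply hyint
        rw [hy, hφ]; simp only [← h, zero_smul, add_zero]; exact hb
    have hgy : g y = g b + l₀ * (g x - g b) := by
      rw [hy, hφ]
      simp only [map_add, map_smul, smul_eq_mul, map_sub]
    nlinarith [mul_lt_mul_of_pos_left (sub_pos.mpr hgb) (sub_pos.mpr hl₀lt)]
  -- extract a ball around y missing C \ B
  obtain ⟨ε, hε, hball⟩ : ∃ ε > 0, ∀ z ∈ C \ B, ε ≤ dist y z := by
    by_contra h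
    push_neg at h
    apply hycl
    rw [Metric.mem_closure_iff]
    intro ε hε
    obtain ⟨z, hz, hzd⟩ := h ε hε
    exact ⟨z, hz, hzd⟩
  have hxy : x ≠ y := fun h => hxB (h ▸ hyB)
  have hxynorm : (0:ℝ) < ‖x - y‖ := by
    rw [norm_pos_iff, sub_ne_zero]; exact hxy
  refine ⟨y, hyB, fun s hs hs1 hsC => ?_⟩
  -- choose a small σ
  set σ : ℝ := min s (ε / (2 * ‖x - y‖)) with hσdef
  have hσpos : 0 < σ := lt_min hs (by positivity)
  have hσs : σ ≤ s := min_le_left _ _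
  have hσsmall : σ * ‖x - y‖ ≤ ε / 2 := by
    have h1 : σ ≤ ε / (2 * ‖x - y‖) := min_le_right _ _
    calc σ * ‖x - y‖ ≤ (ε / (2 * ‖x - y‖)) * ‖x - y‖ :=
          mul_le_mul_of_nonneg_right h1 (norm_nonneg _)
      _ = ε / 2 := by field_simp
  set p : X := y + σ • (x - y) with hp
  -- p ∈ C by convexity
  have hpC : p ∈ C := by
    have hcomb : p = (1 - σ/s) • y + (σ/s) • (y + s • (x - y)) := by
      have hsne : s ≠ 0 := ne_of_gt hs
      rw [hp]
      match_scalars <;> field_simp <;> ring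
    have hσs1 : σ / s ≤ 1 := div_le_one_of_le₀ hσs hs.le
    have hσs0 : 0 ≤ σ / s := by positivity
    rw [hcomb]
    exact hconv (hBC hyB) hsC (by linarith) hσs0 (by ring)
  -- p ∉ B
  have hpB : p ∉ B := by
    have hpφ : p = φ (l₀ + σ * (1 - l₀)) := by
      rw [hp, hy, hφ]
      simp only
      module
    have hA : l₀ < l₀ + σ * (1 - l₀) := by nlinarith
    have hB2 : l₀ + σ * (1 - l₀) ≤ 1 := by nlinarith
    rw [hpφ]
    exact hnotin _ hA hB2
  -- contradiction with the ball
  have hd : dist y p = σ * ‖x - y‖ := by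
    rw [hp, dist_eq_norm]
    have hyy : y - (y + σ • (x - y)) = -(σ • (x - y)) := by module
    rw [hyy, norm_neg, norm_smul, Real.norm_eq_abs, abs_of_pos hσpos]
  have := hball p ⟨hpC, hpB⟩
  rw [hd] at this
  linarith

set_option maxHeartbeats 1000000 in
theorem stmt_16 {X : Type*} [NormedAddCommGroup X] [NormedSpace ℝ X]
    [FiniteDimensional ℝ X] (hd : 2 ≤ Module.finrank ℝ X)
    (C : Set X) (hclosed : IsClosed C) (hconv : Convex ℝ C) (hne : C ≠ Set.univ)
    (hint : (interior C).Nonempty)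
    (hnoasym : ∀ v : X, ¬ IsAsymptoticDir C v)
    (B : ℕ → Set X)
    (hB : ∀ n, IsClosed (B n) ∧ Convex ℝ (B n) ∧ B n ≠ Set.univ ∧
      (interior (B n)).Nonempty ∧ B n ⊆ C)
    (hmono : ∀ n, B (n + 1) ⊆ B n)
    (hempty : ⋂ n, B n = ∅) :
    ⋂ n, eExt C (B n) = ∅ := by
  rw [Set.eq_empty_iff_forall_notMem]
  intro x hx
  rw [Set.mem_iInter] at hx
  obtain ⟨N, hN⟩ : ∃ N, x ∉ B N := by
    by_contra h; push_neg at h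
    have : x ∈ ⋂ n, B n := Set.mem_iInter.mpr h
    rw [hempty] at this; exact this
  have hanti : Antitone B := antitone_nat_of_succ_le hmono
  have hxBn : ∀ n, x ∉ B (N + n) := fun n h => hN (hanti (Nat.le_add_right N n) h)
  have hchoice : ∀ n : ℕ, ∃ y ∈ B (N + n),
      ∀ s : ℝ, 0 < s → s ≤ 1 → y + s • (x - y) ∉ C := by
    intro n
    obtain ⟨hcl, hcv, -, hint', hsub⟩ := hB (N + n)
    obtain ⟨b, hb⟩ := hint'
    exact exit_ray hconv hcl hcv hsub hb (hx (N + n)) (hxBn n)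
  choose y hyB hyray using hchoice
  have hyC : ∀ n, y n ∈ C := fun n => (hB (N + n)).2.2.2.2 (hyB n)
  have hxC : x ∉ C := by
    have := hyray 0 1 one_pos le_rfl
    simpa using this
  have hyx : ∀ n, y n ≠ x := fun n h => hxC (h ▸ hyC n)
  have hrpos : ∀ n, (0:ℝ) < ‖y n - x‖ := fun n => by
    rw [norm_pos_iff, sub_ne_zero]; exact hyx n
  have hmemB : ∀ (m n : ℕ), m ≤ N + n → y n ∈ B m := fun m n h => hanti h (hyB n)
  -- the distances ‖y n - x‖ tend to infinity
  have htends : Tendsto (fun n => ‖y n - x‖) atTop atTop := by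
    by_contra hcon
    rw [tendsto_atTop_atTop] at hcon
    push_neg at hcon
    obtain ⟨R, hR⟩ := hcon
    have hfreq : ∃ᶠ n in atTop, ‖y n - x‖ < R := by
      rw [Filter.frequently_atTop]
      intro a; obtain ⟨n, hn, hn'⟩ := hR a; exact ⟨n, hn, hn'⟩
    obtain ⟨φ, hφmono, hφ⟩ := Filter.extraction_of_frequently_atTop hfreq
    have hbd : ∀ k, y (φ k) ∈ Metric.closedBall x R := fun k => by
      rw [Metric.mem_closedBall, dist_eq_norm]
      exact (hφ k).le
    obtain ⟨a, -, ψ, hψmono, hψ⟩ :=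
      tendsto_subseq_of_bounded Metric.isBounded_closedBall hbd
    have haB : ∀ m, a ∈ B m := by
      intro m
      apply (hB m).1.mem_of_tendsto hψ
      filter_upwards [Filter.eventually_ge_atTop m] with k hk
      have h1 : m ≤ φ (ψ k) := le_trans hk (le_trans (hψmono.le_apply) (hφmono.le_apply))
      exact hmemB m (ψ k |> φ) (le_trans h1 (Nat.le_add_left _ N))
    have : a ∈ ⋂ n, B n := Set.mem_iInter.mpr haB
    rw [hempty] at this; exact this
  -- unit directions
  set u0 : ℕ → X := fun n => ‖y n - x‖⁻¹ • (y n - x) with hu0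
  have hu0mem : ∀ n, u0 n ∈ Metric.sphere (0:X) 1 := fun n => by
    simp only [hu0, Metric.mem_sphere, dist_zero_right]
    rw [norm_smul (α := ℝ) (β := X), norm_inv, norm_norm]
    exact inv_mul_cancel₀ (hrpos n).ne'
  obtain ⟨u, humem, φ, hφmono, hφu⟩ := (isCompact_sphere (0:X) 1).tendsto_subseq hu0mem
  have hφu' : Tendsto (fun k => u0 (φ k)) atTop (nhds u) := hφu
  have hunorm : ‖u‖ = 1 := by simpa using humem
  have hune : u ≠ 0 := by intro h; rw [h] at hunorm; simp at hunorm
  have hrφ : Tendsto (fun k => ‖y (φ k) - x‖) atTop atTop := htends.comp hφmono.tendsto_atTop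
  -- points along the approximate rays are outside C
  have hkey : ∀ (t : ℝ) (k : ℕ), 0 ≤ t → t < ‖y (φ k) - x‖ → x + t • u0 (φ k) ∉ C := by
    intro t k ht htk
    have hr := hrpos (φ k)
    have hrne : ‖y (φ k) - x‖ ≠ 0 := hr.ne'
    have hs : x + t • u0 (φ k)
        = y (φ k) + (1 - t / ‖y (φ k) - x‖) • (x - y (φ k)) := by
      simp only [hu0]
      match_scalars <;> field_simp <;> ring
    rw [hs]
    refine hyray (φ k) _ ?_ ?_
    · have : t / ‖y (φ k) - x‖ < 1 := (div_lt_one hr).mpr htk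
      linarith
    · have : 0 ≤ t / ‖y (φ k) - x‖ := by positivity
      linarith
  -- the ray from x in direction u avoids the interior of C
  have hray : ∀ t : ℝ, 0 ≤ t → x + t • u ∉ interior C := by
    intro t ht hmem
    have hlim : Tendsto (fun k => x + t • u0 (φ k)) atTop (nhds (x + t • u)) :=
      (hφu'.const_smul t).const_add x
    have hev : ∀ᶠ k in atTop, x + t • u0 (φ k) ∈ interior C :=
      hlim.eventually (isOpen_interior.mem_nhds hmem)
    have hev2 : ∀ᶠ k in atTop, t < ‖y (φ k) - x‖ := hrφ.eventually_gt_atTop t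
    obtain ⟨k, h1, h2⟩ := (hev.and hev2).exists
    exact hkey t k ht h2 (interior_subset h1)
  -- u is a recession direction of C
  have hrec : ∀ c ∈ C, ∀ t : ℝ, 0 ≤ t → c + t • u ∈ C := by
    intro c hc t ht
    have h1 : Tendsto (fun k => t / ‖y (φ k) - x‖) atTop (nhds 0) :=
      Tendsto.div_atTop tendsto_const_nhds hrφ
    have hlim0 : Tendsto
        (fun k => c + t • u0 (φ k) + (t / ‖y (φ k) - x‖) • (x - c))
        atTop (nhds (c + t • u + (0:ℝ) • (x - c))) :=
      ((hφu'.const_smul t).const_add c).add (h1.smul_const (x - c))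
    have hlim : Tendsto (fun k => c + (t / ‖y (φ k) - x‖) • (y (φ k) - c))
        atTop (nhds (c + t • u)) := by
      refine Tendsto.congr (fun k => ?_) (by simpa using hlim0)
      have hrne : ‖y (φ k) - x‖ ≠ 0 := (hrpos (φ k)).ne'
      simp only [hu0]
      match_scalars <;> field_simp <;> ring
    apply hclosed.mem_of_tendsto hlim
    filter_upwards [hrφ.eventually_gt_atTop t] with k hk
    have hr := hrpos (φ k)
    have h01 : 0 ≤ t / ‖y (φ k) - x‖ := by positivity
    have h02 : t / ‖y (φ k) - x‖ ≤ 1 := (div_le_one hr).mpr hk.le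
    have hcomb : c + (t / ‖y (φ k) - x‖) • (y (φ k) - c)
        = (1 - t / ‖y (φ k) - x‖) • c + (t / ‖y (φ k) - x‖) • y (φ k) := by
      module
    rw [hcomb]
    exact hconv hc (hyC (φ k)) (by linarith) h01 (by ring)
  -- the distance function along the ray
  set F : ℝ → ℝ := fun t => Metric.infDist (x + t • u) C with hF
  have hCne : C.Nonempty := ⟨y 0, hyC 0⟩
  have hFanti : Antitone F := by
    intro t t' htt'
    by_contra hlt
    push_neg at hlt
    obtain ⟨q, hq, hdq⟩ := (Metric.infDist_lt_iff hCne).mp hlt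
    have hq' : q + (t' - t) • u ∈ C := hrec q hq _ (by linarith)
    have h1 : F t' ≤ dist (x + t' • u) (q + (t' - t) • u) :=
      Metric.infDist_le_dist_of_mem hq'
    have hdist : dist (x + t' • u) (q + (t' - t) • u) = dist (x + t • u) q := by
      rw [dist_eq_norm, dist_eq_norm]
      congr 1
      module
    rw [hdist] at h1
    linarith
  have hFbdd : BddBelow (Set.range F) := by
    refine ⟨0, fun v hv => ?_⟩
    obtain ⟨t, ht⟩ := hv
    exact ht ▸ Metric.infDist_nonneg
  set L : ℝ := ⨅ t, F t with hL
  have hFL : Tendsto F atTop (nhds L) := tendsto_atTop_ciInf hFanti hFbdd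
  have hLle : ∀ t, L ≤ F t := fun t => ciInf_le hFbdd t
  have hL0 : 0 ≤ L := le_ciInf (fun t => Metric.infDist_nonneg)
  rcases eq_or_lt_of_le hL0 with hLz | hLpos
  · exact hnoasym u ⟨hune, x, hray, by rw [hLz]; exact hFL⟩
  -- the case L > 0 : shift the ray
  have hFnat : Tendsto (fun k : ℕ => F (k:ℝ)) atTop (nhds L) :=
    hFL.comp tendsto_natCast_atTop_atTop
  have hqk : ∀ k : ℕ, ∃ q ∈ C, dist (x + (k:ℝ) • u) q < F (k:ℝ) + 1/(k+1) := by
    intro k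
    refine (Metric.infDist_lt_iff hCne).mp ?_
    have : (0:ℝ) < 1/(k+1) := by positivity
    have hFk : F (k:ℝ) = Metric.infDist (x + (k:ℝ) • u) C := rfl
    rw [← hFk]
    linarith
  choose q hqC hqd using hqk
  set w : ℕ → X := fun k => q k - (x + (k:ℝ) • u) with hw
  have hwnorm : ∀ k : ℕ, ‖w k‖ = dist (x + (k:ℝ) • u) (q k) := fun k => by
    rw [hw, dist_eq_norm, norm_sub_rev]
  have hwle : ∀ k : ℕ, ‖w k‖ < F (k:ℝ) + 1/(k+1) := fun k => by
    rw [hwnorm]; exact hqd k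
  have hwge : ∀ k : ℕ, F (k:ℝ) ≤ ‖w k‖ := fun k => by
    rw [hwnorm]; exact Metric.infDist_le_dist_of_mem (hqC k)
  have hwtend : Tendsto (fun k => ‖w k‖) atTop (nhds L) := by
    have haux : Tendsto (fun k : ℕ => F (k:ℝ) + 1/(k+1)) atTop (nhds (L + 0)) :=
      hFnat.add tendsto_one_div_add_atTop_nhds_zero_nat
    rw [add_zero] at haux
    exact tendsto_of_tendsto_of_tendsto_of_le_of_le hFnat haux hwge
      (fun k => (hwle k).le)
  have hwbdd : ∀ k, w k ∈ Metric.closedBall (0:X) (F 0 + 1) := by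
    intro k
    rw [Metric.mem_closedBall, dist_zero_right]
    have h1 : F (k:ℝ) ≤ F 0 := hFanti (by positivity)
    have h2 : 1/((k:ℝ)+1) ≤ 1 := by
      rw [div_le_one (by positivity)]
      have : (0:ℝ) ≤ (k:ℝ) := by positivity
      linarith
    linarith [hwle k]
  obtain ⟨w', -, ψ, hψmono, hψw⟩ :=
    (isCompact_closedBall (0:X) (F 0 + 1)).tendsto_subseq hwbdd
  have hψw' : Tendsto (fun j => w (ψ j)) atTop (nhds w') := hψw
  have hwinf : ‖w'‖ = L := by
    have h1 : Tendsto (fun j => ‖w (ψ j)‖) atTop (nhds ‖w'‖) :=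
      (continuous_norm.tendsto w').comp hψw'
    have h2 : Tendsto (fun j => ‖w (ψ j)‖) atTop (nhds L) :=
      hwtend.comp hψmono.tendsto_atTop
    exact tendsto_nhds_unique h1 h2
  set x₀ : X := x + w' with hx₀
  -- the shifted ray avoids the interior of C
  have hray₀ : ∀ t : ℝ, 0 ≤ t → x₀ + t • u ∉ interior C := by
    intro t ht hmem
    obtain ⟨δ, hδ, hball⟩ := Metric.isOpen_iff.mp isOpen_interior _ hmem
    set δ' : ℝ := min (δ/2) L with hδ'
    have hδ'pos : 0 < δ' := lt_min (by linarith) hLpos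
    have hδ'L : δ' ≤ L := min_le_right _ _
    have hδ'δ : δ' < δ := lt_of_le_of_lt (min_le_left _ _) (by linarith)
    set cpt : X := x₀ + t • u - (δ'/L) • w' with hcpt
    have hcptmem : cpt ∈ C := by
      refine interior_subset (hball ?_)
      rw [Metric.mem_ball, dist_eq_norm, hcpt]
      have h1 : x₀ + t • u - (δ'/L) • w' - (x₀ + t • u) = -((δ'/L) • w') := by module
      rw [h1, norm_neg, norm_smul (α := ℝ) (β := X), Real.norm_eq_abs, hwinf,
        abs_of_pos (by positivity)]
      rw [div_mul_cancel₀ _ hLpos.ne']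
      exact hδ'δ
    have hFt : F t ≤ dist (x + t • u) cpt := Metric.infDist_le_dist_of_mem hcptmem
    have hdd : dist (x + t • u) cpt = L - δ' := by
      rw [dist_eq_norm, hcpt, hx₀]
      have h1 : x + t • u - (x + w' + t • u - (δ'/L) • w') = (δ'/L - 1) • w' := by
        module
      rw [h1, norm_smul (α := ℝ) (β := X), Real.norm_eq_abs, hwinf]
      have h2 : δ'/L - 1 ≤ 0 := by
        rw [sub_nonpos, div_le_one hLpos]; exact hδ'L
      rw [abs_of_nonpos h2]
      field_simp
      ring
    rw [hdd] at hFt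
    linarith [hLle t]
  -- the distance from the shifted ray to C tends to 0
  have htend0 : Tendsto (fun t : ℝ => Metric.infDist (x₀ + t • u) C) atTop (nhds 0) := by
    rw [Metric.tendsto_nhds]
    intro ε hε
    have hev : ∀ᶠ j in atTop, ‖w (ψ j) - w'‖ < ε/2 := by
      have := (tendsto_iff_norm_sub_tendsto_zero.mp hψw')
      exact (this.eventually (gt_mem_nhds (by linarith)))
    obtain ⟨j, hj⟩ := hev.exists
    rw [Filter.eventually_atTop]
    refine ⟨(ψ j : ℝ), fun t htj => ?_⟩
    have hqmem : q (ψ j) + (t - (ψ j : ℝ)) • u ∈ C :=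
      hrec _ (hqC (ψ j)) _ (by linarith)
    have hle : Metric.infDist (x₀ + t • u) C
        ≤ dist (x₀ + t • u) (q (ψ j) + (t - (ψ j : ℝ)) • u) :=
      Metric.infDist_le_dist_of_mem hqmem
    have heq : dist (x₀ + t • u) (q (ψ j) + (t - (ψ j : ℝ)) • u) = ‖w' - w (ψ j)‖ := by
      rw [dist_eq_norm, hx₀, hw]
      congr 1
      module
    rw [heq] at hle
    rw [Real.dist_eq, sub_zero, abs_of_nonneg Metric.infDist_nonneg]
    calc Metric.infDist (x₀ + t • u) C ≤ ‖w' - w (ψ j)‖ := hle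
      _ = ‖w (ψ j) - w'‖ := by rw [norm_sub_rev]
      _ < ε/2 := hj
      _ < ε := by linarith
  exact hnoasym u ⟨hune, x₀, hray₀, htend0⟩
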